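/- Let m ≥ 1 be an integer and b, Ω > 0. If Y has density f(y) = (1/(2b))(2bm/(2bm+Ω))^m exp(−my/(2bm+Ω)) Σ_{i=0}^{m-1} (m-1)!/((m-1-i)!(i!)²) (Ωy/(2b(2bm+Ω)))^i on [0, ∞), then E[Y] = 2b + Ω. -/

import Mathlib

open Real Finset MeasureTheory Set
open scoped NNReal ENNReal

-- integrability
lemma aux_integrable (k : ℕ) {r : ℝ} (hr : 0 < r) :
    IntegrableOn (fun y : ℝ => y ^ k * Real.exp (-(r * y))) (Set.Ioi 0) := by
  have h := integrableOn_rpow_mul_exp_neg_mul_rpow (p := 1) (s := (k : ℝ)) (b := r)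
    (by linarith [Nat.cast_nonneg (α := ℝ) k]) one_pos hr
  simpa [Real.rpow_natCast, neg_mul] using h

-- integral value
lemma aux_integral (k : ℕ) {r : ℝ} (hr : 0 < r) :
    ∫ y in Set.Ioi (0:ℝ), y ^ k * Real.exp (-(r * y)) = k.factorial / r ^ (k + 1) := by
  have h := integral_rpow_mul_exp_neg_mul_Ioi (a := (k : ℝ) + 1) (by positivity) hr
  have h1 : ∀ y ∈ Set.Ioi (0:ℝ), y ^ ((k : ℝ) + 1 - 1) * Real.exp (-(r * y))
      = y ^ k * Real.exp (-(r * y)) := by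
    intro y hy
    rw [add_sub_cancel_right, Real.rpow_natCast]
  rw [setIntegral_congr_fun measurableSet_Ioi h1] at h
  rw [h, Real.Gamma_nat_eq_factorial,
    show ((k:ℝ)+1) = ((k+1 : ℕ):ℝ) by push_cast; ring, Real.rpow_natCast, div_pow, one_pow]
  ring

-- binomial identity
lemma aux_sum (n : ℕ) (x : ℝ) :
    (∑ i ∈ Finset.range (n + 1), (n.choose i : ℝ) * (i + 1) * x ^ i) * (1 + x)
      = (1 + x) ^ n * (1 + (n + 1) * x) := by
  have hA : (∑ i ∈ Finset.range (n + 1), (n.choose i : ℝ) * x ^ i) = (1 + x) ^ n := by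
    rw [add_comm (1:ℝ) x, add_pow]
    simp [mul_comm]
  have hB : (∑ i ∈ Finset.range (n + 1), (n.choose i : ℝ) * i * x ^ i) * (1 + x)
      = n * x * (1 + x) ^ n := by
    cases n with
    | zero => simp
    | succ k =>
      have : (∑ i ∈ Finset.range (k + 2), ((k+1).choose i : ℝ) * i * x ^ i)
          = (k + 1 : ℝ) * x * ∑ j ∈ Finset.range (k + 1), (k.choose j : ℝ) * x ^ j := by
        rw [Finset.sum_range_succ']
        simp only [Nat.cast_zero, mul_zero, zero_mul, pow_zero, add_zero]
        rw [Finset.mul_sum]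
        refine Finset.sum_congr rfl fun j hj => ?_
        have hc : (k + 1) * k.choose j = (k+1).choose (j+1) * (j+1) := Nat.add_one_mul_choose_eq k j
        have hc' : ((k+1).choose (j+1) : ℝ) * (j+1) = (k+1) * (k.choose j : ℝ) := by
          exact_mod_cast congrArg (Nat.cast : ℕ → ℝ) hc.symm
        push_cast
        push_cast at hc'
        linear_combination x ^ (j + 1) * hc'
      rw [this]
      have hA' : (∑ j ∈ Finset.range (k + 1), (k.choose j : ℝ) * x ^ j) = (1 + x) ^ k := by
        rw [add_comm (1:ℝ) x, add_pow]; simp [mul_comm]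
      rw [hA']
      push_cast
      ring
  have hsplit : (∑ i ∈ Finset.range (n + 1), (n.choose i : ℝ) * (i + 1) * x ^ i)
      = (∑ i ∈ Finset.range (n + 1), (n.choose i : ℝ) * i * x ^ i)
        + ∑ i ∈ Finset.range (n + 1), (n.choose i : ℝ) * x ^ i := by
    rw [← Finset.sum_add_distrib]
    exact Finset.sum_congr rfl fun i _ => by ring
  rw [hsplit, add_mul, hB, hA]
  ring

lemma aux_main (n : ℕ) (b Ω : ℝ) (hb : 0 < b) (hΩ : 0 < Ω) :
    ∫ y in Set.Ioi (0:ℝ), (1 / (2 * b) * (2 * b * ((n:ℝ)+1) / (2 * b * ((n:ℝ)+1) + Ω)) ^ (n+1)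
          * Real.exp (-(((n:ℝ)+1) * y) / (2 * b * ((n:ℝ)+1) + Ω))
          * ∑ i ∈ Finset.range (n+1),
              (n.factorial : ℝ) / (((n - i).factorial : ℝ) * ((i.factorial : ℝ))^2)
                * (Ω * y / (2 * b * (2 * b * ((n:ℝ)+1) + Ω))) ^ i) * y = 2 * b + Ω := by
  set M : ℝ := (n:ℝ) + 1 with hMdef
  have hM : 0 < M := by positivity
  set c : ℝ := 2 * b * M + Ω with hcdef
  have hc : 0 < c := by positivity
  set C0 : ℝ := 1 / (2 * b) * (2 * b * M / c) ^ (n+1) with hC0def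
  have hr : 0 < M / c := by positivity
  clear_value M c C0
  -- pointwise rewrite
  have hpt : ∀ y ∈ Set.Ioi (0:ℝ),
      (C0 * Real.exp (-(M * y) / c)
        * ∑ i ∈ Finset.range (n+1),
            (n.factorial : ℝ) / (((n - i).factorial : ℝ) * ((i.factorial : ℝ))^2)
              * (Ω * y / (2 * b * c)) ^ i) * y
      = ∑ i ∈ Finset.range (n+1),
          (C0 * ((n.factorial : ℝ) / (((n - i).factorial : ℝ) * ((i.factorial : ℝ))^2))
            * (Ω / (2 * b * c)) ^ i) * (y ^ (i+1) * Real.exp (-(M / c * y))) := by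
    intro y _
    rw [show -(M * y) / c = -(M / c * y) by ring]
    rw [Finset.mul_sum, Finset.sum_mul]
    refine Finset.sum_congr rfl fun i _ => ?_
    ring
  rw [setIntegral_congr_fun measurableSet_Ioi hpt]
  rw [MeasureTheory.integral_finset_sum _ (fun i _ =>
    ((aux_integrable (i+1) hr).const_mul _))]
  simp_rw [MeasureTheory.integral_const_mul, aux_integral _ hr]
  -- now pure algebra
  have hterm : ∀ i ∈ Finset.range (n+1),
      C0 * ((n.factorial : ℝ) / (((n - i).factorial : ℝ) * ((i.factorial : ℝ))^2))
          * (Ω / (2 * b * c)) ^ i * (((i+1).factorial : ℝ) / (M / c) ^ (i + 1 + 1))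
      = (C0 * (c / M) ^ 2) * ((n.choose i : ℝ) * (i + 1) * (Ω / (2 * b * M)) ^ i) := by
    intro i hi
    have hile : i ≤ n := by simpa using Nat.lt_succ_iff.mp (Finset.mem_range.mp hi)
    have hfac : ((n.choose i : ℝ)) * (i.factorial : ℝ) * ((n - i).factorial : ℝ)
        = (n.factorial : ℝ) := by exact_mod_cast Nat.choose_mul_factorial_mul_factorial hile
    have hfs : (((i+1).factorial : ℝ)) = ((i:ℝ) + 1) * (i.factorial : ℝ) := by
      rw [Nat.factorial_succ]; push_cast; ring
    rw [← hfac, hfs]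
    have h1 : (i.factorial : ℝ) ≠ 0 := by positivity
    have h2 : ((n - i).factorial : ℝ) ≠ 0 := by positivity
    have hM0 : M ≠ 0 := hM.ne'
    have hc0 : c ≠ 0 := hc.ne'
    field_simp
    have e1 : M ^ i * M⁻¹ ^ i = 1 := by rw [← mul_pow, mul_inv_cancel₀ hM0, one_pow]
    have e2 : c ^ 2 * c⁻¹ ^ 2 = 1 := by rw [← mul_pow, mul_inv_cancel₀ hc0, one_pow]
    linear_combination (-(C0 * (n.choose i : ℝ) * Ω ^ i * b⁻¹ ^ i * c⁻¹ ^ i * M ^ 2 * (1 / 2) ^ i)) * (c ^ 2 * c⁻¹ ^ 2 * e1 + e2)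
  rw [Finset.sum_congr rfl hterm, ← Finset.mul_sum]
  -- use the key identity
  set x : ℝ := Ω / (2 * b * M) with hxdef
  have hx0 : 0 < 1 + x := by positivity
  have hkey := aux_sum n x
  have h3 : (C0 * (c / M) ^ 2) * ((∑ i ∈ Finset.range (n + 1),
      (n.choose i : ℝ) * (i + 1) * x ^ i) * (1 + x)) = (2 * b + Ω) * (1 + x) := by
    rw [hkey]
    have h1x : 1 + x = c / (2 * b * M) := by
      rw [hxdef, hcdef]; field_simp
    have h2x : 1 + ((n:ℝ) + 1) * x = (2 * b + Ω) / (2 * b) := by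
      rw [hxdef, ← hMdef]; field_simp
    rw [h1x, h2x, hC0def]
    rw [div_pow, div_pow, div_pow]
    field_simp
    ring
  have h4 : (C0 * (c / M) ^ 2 * ∑ i ∈ Finset.range (n + 1),
      (n.choose i : ℝ) * (i + 1) * x ^ i) * (1 + x) = (2 * b + Ω) * (1 + x) := by
    rw [mul_assoc]; exact h3
  exact mul_right_cancel₀ (ne_of_gt hx0) h4

theorem stmt9 {α : Type*} [MeasurableSpace α] (P : Measure α) [IsProbabilityMeasure P]
    (m : ℕ) (hm : 1 ≤ m) (b Ω : ℝ) (hb : 0 < b) (hΩ : 0 < Ω)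
    (Y : α → ℝ) (hY : Measurable Y)
    (hpdf : Measure.map Y P = volume.withDensity (fun y => ENNReal.ofReal
      (Set.indicator (Set.Ici (0 : ℝ))
        (fun y => 1 / (2 * b) * (2 * b * m / (2 * b * m + Ω)) ^ m
          * Real.exp (-(m * y) / (2 * b * m + Ω))
          * ∑ i ∈ Finset.range m,
              ((m - 1).factorial : ℝ) / (((m - 1 - i).factorial : ℝ) * ((i.factorial : ℝ))^2)
                * (Ω * y / (2 * b * (2 * b * m + Ω))) ^ i) y))) :
    ∫ ω, Y ω ∂P = 2 * b + Ω := by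
  obtain ⟨n, rfl⟩ : ∃ n, m = n + 1 := ⟨m - 1, by omega⟩
  simp only [Nat.add_sub_cancel] at hpdf
  push_cast at hpdf
  set g : ℝ → ℝ := fun y => 1 / (2 * b) * (2 * b * ((n:ℝ)+1) / (2 * b * ((n:ℝ)+1) + Ω)) ^ (n+1)
          * Real.exp (-(((n:ℝ)+1) * y) / (2 * b * ((n:ℝ)+1) + Ω))
          * ∑ i ∈ Finset.range (n+1),
              (n.factorial : ℝ) / (((n - i).factorial : ℝ) * ((i.factorial : ℝ))^2)
                * (Ω * y / (2 * b * (2 * b * ((n:ℝ)+1) + Ω))) ^ i with hgdef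
  have hgm : Measurable g := by fun_prop
  have hg0 : ∀ y ∈ Set.Ici (0:ℝ), 0 ≤ g y := by
    intro y hy
    have hy0 : (0:ℝ) ≤ y := hy
    apply mul_nonneg (by positivity)
    apply Finset.sum_nonneg
    intro i _
    positivity
  have hF0 : ∀ y, 0 ≤ Set.indicator (Set.Ici (0:ℝ)) g y := fun y =>
    Set.indicator_nonneg hg0 y
  have hFm : Measurable fun y => (Set.indicator (Set.Ici (0:ℝ)) g y).toNNReal :=
    (hgm.indicator measurableSet_Ici).real_toNNReal
  have h1 : ∫ ω, Y ω ∂P = ∫ y, y ∂(Measure.map Y P) :=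
    (integral_map hY.aemeasurable aestronglyMeasurable_id).symm
  rw [h1, hpdf]
  rw [show (fun y => ENNReal.ofReal (Set.indicator (Set.Ici (0:ℝ)) g y))
      = (fun y => ((Set.indicator (Set.Ici (0:ℝ)) g y).toNNReal : ℝ≥0∞)) from rfl]
  rw [integral_withDensity_eq_integral_smul hFm]
  have h2 : (fun y => (Set.indicator (Set.Ici (0:ℝ)) g y).toNNReal • y)
      = Set.indicator (Set.Ici (0:ℝ)) (fun y => g y * y) := by
    funext y
    by_cases hy : y ∈ Set.Ici (0:ℝ)
    · simp only [Set.indicator_of_mem hy, NNReal.smul_def, smul_eq_mul,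
        Real.coe_toNNReal _ (hg0 y hy)]
    · simp [Set.indicator_of_notMem hy]
  rw [h2, integral_indicator measurableSet_Ici, integral_Ici_eq_integral_Ioi]
  exact aux_main n b Ω hb hΩ
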